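/- Frieze periodicity for type A_n: let (d_{i,j}) be an array over a field satisfying the diamond rule d_{i,j+1} d_{i,j-1} = d_{i-1,j} d_{i+1,j} + 1 for all 1 ≤ i ≤ n (indices j ∈ ℤ), with boundary conditions d_{0,j} = 1 and d_{n+1,j} = 1 for all j, and all entries nonzero. Then the array is periodic in j with period dividing 2(n+3): d_{i, j+2(n+3)} = d_{i,j}; moreover the glide symmetry d_{i, j+n+3} = d_{n+1-i, j} holds. -/
import Mathlib


/-- Conway–Coxeter frieze periodicity for type `A_n`: an array satisfying the
    diamond rule with boundary rows of `1`s is periodic of period `2(n+3)` and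
    satisfies the glide symmetry `d_{i,j+n+3} = d_{n+1-i,j}`. -/
theorem stmt_15 (n : ℕ) (K : Type*) [Field K] (d : ℤ → ℤ → K)
    (hnz : ∀ i j : ℤ, 0 ≤ i → i ≤ (n : ℤ) + 1 → d i j ≠ 0)
    (htop : ∀ j : ℤ, d 0 j = 1)
    (hbot : ∀ j : ℤ, d ((n : ℤ) + 1) j = 1)
    (hrec : ∀ i j : ℤ, 1 ≤ i → i ≤ (n : ℤ) →
      d i (j + 1) * d i (j - 1) = d (i - 1) j * d (i + 1) j + 1) :
    ∀ i j : ℤ, 0 ≤ i → i ≤ (n : ℤ) + 1 →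
      d i (j + ((n : ℤ) + 3)) = d ((n : ℤ) + 1 - i) j ∧
      d i (j + 2 * ((n : ℤ) + 3)) = d i j := by
  -- extended array: zero outside rows 0..n+1
  set D : ℤ → ℤ → K := fun i j => if 0 ≤ i ∧ i ≤ (n:ℤ)+1 then d i j else 0 with hDdef
  have hDin : ∀ i j : ℤ, 0 ≤ i → i ≤ (n:ℤ)+1 → D i j = d i j := by
    intro i j h1 h2; simp only [hDdef]; rw [if_pos ⟨h1, h2⟩]
  have hDout : ∀ i j : ℤ, (i < 0 ∨ (n:ℤ)+1 < i) → D i j = 0 := by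
    intro i j h; simp only [hDdef]; rw [if_neg]; omega
  have hD0 : ∀ j : ℤ, D 0 j = 1 := fun j => by
    rw [hDin 0 j le_rfl (by positivity), htop]
  have hDtop : ∀ j : ℤ, D ((n:ℤ)+1) j = 1 := fun j => by
    rw [hDin _ j (by positivity) le_rfl, hbot]
  have hDnz : ∀ i j : ℤ, 0 ≤ i → i ≤ (n:ℤ)+1 → D i j ≠ 0 := by
    intro i j h1 h2; rw [hDin i j h1 h2]; exact hnz i j h1 h2
  have hDrec : ∀ i j : ℤ, 0 ≤ i → i ≤ (n:ℤ)+1 →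
      D i (j+1) * D i (j-1) = D (i-1) j * D (i+1) j + 1 := by
    intro i j h1 h2
    rcases eq_or_lt_of_le h1 with h0 | h0
    · rw [← h0, hD0, hD0, hDout (0-1) j (by omega)]; ring
    rcases eq_or_lt_of_le h2 with ht | ht
    · rw [ht, hDtop, hDtop, hDout ((n:ℤ)+1+1) j (by omega)]; ring
    · have ha : (1:ℤ) ≤ i := h0
      have hb : i ≤ (n:ℤ) := by omega
      rw [hDin i _ h1 h2, hDin i _ h1 h2, hDin (i-1) _ (by omega) (by omega),
        hDin (i+1) _ (by omega) (by omega)]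
      exact hrec i j ha hb
  -- the diagonal invariant
  set r : ℤ → ℤ → K := fun i j => (D (i-1) j + D (i+1) (j+2)) / D i (j+1) with hrdef
  have hstep : ∀ i j : ℤ, 0 ≤ i → i ≤ (n:ℤ) → r i j = r (i+1) (j-1) := by
    intro i j h1 h2
    have A := hDrec i j h1 (by omega)
    have B := hDrec (i+1) (j+1) (by omega) (by omega)
    rw [show (j:ℤ)+1+1 = j+2 from by ring, show (j:ℤ)+1-1 = j from by ring,
      show (i:ℤ)+1-1 = i from by ring, show (i:ℤ)+1+1 = i+2 from by ring] at B
    simp only [hrdef]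
    rw [show (i:ℤ)+1-1 = i from by ring, show (j:ℤ)-1+2 = j+1 from by ring,
      show (j:ℤ)-1+1 = j from by ring, show (i:ℤ)+1+1 = i+2 from by ring]
    rw [div_eq_div_iff (hDnz i (j+1) h1 (by omega)) (hDnz (i+1) j (by omega) (by omega))]
    linear_combination B - A
  have htel : ∀ k : ℕ, (k:ℤ) ≤ (n:ℤ)+1 → ∀ j : ℤ, r 0 j = r k (j - k) := by
    intro k
    induction k with
    | zero => intro _ j; norm_num
    | succ m ih =>
      intro hk j
      have h1 : (m:ℤ) ≤ (n:ℤ)+1 := by push_cast at hk ⊢; omega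
      have h2 : (m:ℤ) ≤ (n:ℤ) := by push_cast at hk; omega
      rw [ih h1 j, hstep m (j - m) (by positivity) h2]
      congr 1 <;> push_cast <;> ring
  have hr0 : ∀ j : ℤ, r 0 j = D 1 (j+2) := by
    intro j
    simp only [hrdef]
    rw [hDout (0-1) j (by omega), hD0]
    ring
  have hrtop : ∀ j : ℤ, r ((n:ℤ)+1) j = D n j := by
    intro j
    simp only [hrdef]
    rw [hDout ((n:ℤ)+1+1) (j+2) (by omega), hDtop,
      show (n:ℤ)+1-1 = (n:ℤ) from by ring]
    ring
  -- key identity: d 1 (j + n + 3) = d n j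
  have hkey : ∀ j : ℤ, d 1 (j + ((n:ℤ)+3)) = d (n:ℤ) j := by
    intro j
    have h := htel (n+1) (by push_cast; omega) (j + (n:ℤ) + 1)
    rw [hr0] at h
    push_cast at h
    rw [hrtop] at h
    rw [show j + (n:ℤ) + 1 - ((n:ℤ)+1) = j from by ring] at h
    rw [hDin 1 _ (by omega) (by omega), hDin (n:ℤ) _ (by omega) (by omega)] at h
    rw [show j + ((n:ℤ)+3) = j + (n:ℤ) + 1 + 2 from by ring]
    exact h
  -- glide symmetry by induction on the row
  have hglide : ∀ k : ℕ, (k:ℤ) ≤ (n:ℤ)+1 → ∀ j : ℤ,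
      d (k:ℤ) (j + ((n:ℤ)+3)) = d ((n:ℤ)+1-(k:ℤ)) j := by
    intro k
    induction k using Nat.strong_induction_on with
    | _ k ih =>
      match k with
      | 0 =>
        intro _ j
        norm_num [htop, hbot]
      | 1 =>
        intro _ j
        rw [show ((1:ℕ):ℤ) = (1:ℤ) from by norm_num, hkey j,
          show (n:ℤ)+1-1 = (n:ℤ) from by ring]
      | (k+2) =>
        intro hk j
        have hkn : (k:ℤ) + 2 ≤ (n:ℤ) + 1 := by push_cast at hk; omega
        have ih1 := ih (k+1) (by omega) (by push_cast; omega)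
        have ih0 := ih k (by omega) (by push_cast; omega)
        push_cast at ih1 ih0
        -- diamond at (k+1, j + n+3)
        have A := hrec ((k:ℤ)+1) (j + ((n:ℤ)+3)) (by omega) (by omega)
        -- diamond at (n-k, j)
        have B := hrec ((n:ℤ)-k) j (by omega) (by omega)
        rw [show j + ((n:ℤ)+3) + 1 = (j+1) + ((n:ℤ)+3) from by ring,
          show j + ((n:ℤ)+3) - 1 = (j-1) + ((n:ℤ)+3) from by ring,
          ih1 (j+1), ih1 (j-1), show (k:ℤ)+1-1 = (k:ℤ) from by ring,
          ih0 j, show (k:ℤ)+1+1 = (k:ℤ)+2 from by ring] at A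
        rw [show (n:ℤ)+1-((k:ℤ)+1) = (n:ℤ)-k from by ring] at A
        rw [A, show (n:ℤ)-k+1 = (n:ℤ)+1-k from by ring, show (n:ℤ)-k-1 = (n:ℤ)+1-((k:ℤ)+2) from by ring] at B
        have hnz' : d ((n:ℤ)+1-k) j ≠ 0 := hnz _ j (by omega) (by omega)
        have hB2 : d ((n:ℤ)+1-(k:ℤ)) j * d ((k:ℤ)+2) (j + ((n:ℤ)+3))
            = d ((n:ℤ)+1-(k:ℤ)) j * d ((n:ℤ)+1-((k:ℤ)+2)) j := by linear_combination B
        have hfin := mul_left_cancel₀ hnz' hB2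
        rw [show ((k+2:ℕ):ℤ) = (k:ℤ)+2 from by push_cast; ring]
        exact hfin
  -- conclude
  intro i j h0 hi
  obtain ⟨k, rfl⟩ : ∃ k : ℕ, (k:ℤ) = i := ⟨i.toNat, by omega⟩
  have g1 := hglide k hi j
  refine ⟨g1, ?_⟩
  have g2 := hglide k hi (j + ((n:ℤ)+3))
  obtain ⟨m, hm⟩ : ∃ m : ℕ, (m:ℤ) = (n:ℤ)+1-(k:ℤ) := ⟨((n:ℤ)+1-(k:ℤ)).toNat, by omega⟩
  have g3 := hglide m (by omega) j
  rw [hm] at g3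
  rw [show j + 2*((n:ℤ)+3) = j + ((n:ℤ)+3) + ((n:ℤ)+3) from by ring, g2, g3,
    show (n:ℤ)+1-((n:ℤ)+1-(k:ℤ)) = (k:ℤ) from by ring]
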